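/- Let K₀ and M₀ be closed subspaces of a complex Hilbert space E whose orthogonal projections do not commute (P_{K₀} ∘ P_{M₀} ≠ P_{M₀} ∘ P_{K₀}). Set C := com(K₀, M₀), K := K₀ ⊓ Cᗮ and M := M₀ ⊓ Cᗮ. Then K ≠ ⊥, K ⊓ M = ⊥, and K ∗ M = K. (In particular the Sasaki projection K ∗ M can be strictly larger than the meet K ⊓ M.) -/

import Mathlib

set_option linter.unusedSectionVars false

variable {E : Type*} [NormedAddCommGroup E] [InnerProductSpace ℂ E] [CompleteSpace E]

/-- Orthogonal projection onto (the topological closure of) a submodule, as a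
continuous linear operator on `E`. For a closed subspace `K` this is the
orthogonal projection `P_K` onto `K` itself. -/
noncomputable def proj (K : Submodule ℂ E) : E →L[ℂ] E :=
  K.topologicalClosure.subtypeL.comp K.topologicalClosure.orthogonalProjection


/-- The commutator `com(K, M)` of two subspaces. -/
noncomputable def com (K M : Submodule ℂ E) : Submodule ℂ E :=
  (K ⊓ M) ⊔ (K ⊓ Mᗮ) ⊔ (Kᗮ ⊓ M) ⊔ (Kᗮ ⊓ Mᗮ)


/-- The Sasaki arrow `K ⇒ M`. -/
noncomputable def sasaki (K M : Submodule ℂ E) : Submodule ℂ E :=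
  Kᗮ ⊔ (K ⊓ M)


/-- The Sasaki projection `K ∗ M := (K ⇒ Mᗮ)ᗮ`. -/
noncomputable def sproj (K M : Submodule ℂ E) : Submodule ℂ E :=
  (sasaki K Mᗮ)ᗮ

local notation "⟪" x ", " y "⟫" => @inner ℂ _ _ x y

lemma sub_orthogonalProjection_mem_orthogonal {K : Submodule ℂ E} [K.HasOrthogonalProjection]
    (v : E) : v - (Submodule.orthogonalProjection K v : E) ∈ Kᗮ :=
  Submodule.sub_starProjection_mem_orthogonal v

lemma eq_orthogonalProjection_of_mem_orthogonal {K : Submodule ℂ E} [K.HasOrthogonalProjection]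
    {u v : E} (hv : v ∈ K) (hvo : u - v ∈ Kᗮ) : (Submodule.orthogonalProjection K u : E) = v :=
  Submodule.eq_starProjection_of_mem_orthogonal hv hvo

lemma aux_closed_inf (K M : Submodule ℂ E) (hK : IsClosed (K : Set E))
    (hM : IsClosed (M : Set E)) : IsClosed ((K ⊓ M : Submodule ℂ E) : Set E) := by
  rw [Submodule.coe_inf]; exact hK.inter hM

lemma proj_apply_of_isClosed (K : Submodule ℂ E) (hK : IsClosed (K : Set E))
    [CompleteSpace K] (x : E) :
    proj K x = (Submodule.orthogonalProjection K x : E) := by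
  have h : K.topologicalClosure = K := hK.submodule_topologicalClosure_eq
  show (Submodule.orthogonalProjection K.topologicalClosure x : E) = _
  exact eq_orthogonalProjection_of_mem_orthogonal (K := K.topologicalClosure)
    (by rw [h]; exact (Submodule.orthogonalProjection K x).2)
    (by rw [h]; exact sub_orthogonalProjection_mem_orthogonal x)

lemma com_comm (K M : Submodule ℂ E) : com K M = com M K := by
  unfold com
  rw [inf_comm K M, inf_comm K Mᗮ, inf_comm Kᗮ M, inf_comm Kᗮ Mᗮ]
  ac_rfl

lemma mem_com_left_inf (K M : Submodule ℂ E) : K ⊓ M ≤ com K M :=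
  le_sup_of_le_left (le_sup_of_le_left le_sup_left)

lemma mem_com_left_infc (K M : Submodule ℂ E) : K ⊓ Mᗮ ≤ com K M :=
  le_sup_of_le_left (le_sup_of_le_left le_sup_right)

lemma mem_com_leftc_inf (K M : Submodule ℂ E) : Kᗮ ⊓ M ≤ com K M :=
  le_sup_of_le_left le_sup_right

/-- Key decomposition: for `x ∈ K`, the part of `x` left after projecting onto
`K ⊓ M` and `K ⊓ Mᗮ` lies in `K ⊓ (com K M)ᗮ`. -/
lemma decomp (K M : Submodule ℂ E) (hK : IsClosed (K : Set E)) (hM : IsClosed (M : Set E))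
    {x : E} (hx : x ∈ K) :
    ∃ a ∈ K ⊓ M, ∃ b ∈ K ⊓ Mᗮ, x - a - b ∈ K ⊓ (com K M)ᗮ := by
  haveI : CompleteSpace ↥(K ⊓ M) := (aux_closed_inf K M hK hM).completeSpace_coe
  haveI : CompleteSpace ↥(K ⊓ Mᗮ) :=
    (aux_closed_inf K Mᗮ hK M.isClosed_orthogonal).completeSpace_coe
  set a : E := (Submodule.orthogonalProjection (K ⊓ M) x : E) with ha
  set b : E := (Submodule.orthogonalProjection (K ⊓ Mᗮ) x : E) with hb
  have haM : a ∈ K ⊓ M := (Submodule.orthogonalProjection (K ⊓ M) x).2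
  have hbM : b ∈ K ⊓ Mᗮ := (Submodule.orthogonalProjection (K ⊓ Mᗮ) x).2
  refine ⟨a, haM, b, hbM, ?_, ?_⟩
  · exact K.sub_mem (K.sub_mem hx haM.1) hbM.1
  · -- x - a - b ∈ (com K M)ᗮ
    have hcom : (com K M)ᗮ = ((K ⊓ M)ᗮ ⊓ (K ⊓ Mᗮ)ᗮ) ⊓ ((Kᗮ ⊓ M)ᗮ ⊓ (Kᗮ ⊓ Mᗮ)ᗮ) := by
      unfold com
      calc ((K ⊓ M) ⊔ (K ⊓ Mᗮ) ⊔ (Kᗮ ⊓ M) ⊔ (Kᗮ ⊓ Mᗮ))ᗮ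
          = (((K ⊓ M) ⊔ (K ⊓ Mᗮ)) ⊔ ((Kᗮ ⊓ M) ⊔ (Kᗮ ⊓ Mᗮ)))ᗮ := by rw [sup_assoc]
        _ = ((K ⊓ M) ⊔ (K ⊓ Mᗮ))ᗮ ⊓ ((Kᗮ ⊓ M) ⊔ (Kᗮ ⊓ Mᗮ))ᗮ :=
            (Submodule.inf_orthogonal _ _).symm
        _ = ((K ⊓ M)ᗮ ⊓ (K ⊓ Mᗮ)ᗮ) ⊓ ((Kᗮ ⊓ M)ᗮ ⊓ (Kᗮ ⊓ Mᗮ)ᗮ) := by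
            rw [← Submodule.inf_orthogonal, ← Submodule.inf_orthogonal]
    rw [hcom]
    have hxK : x - a - b ∈ K := K.sub_mem (K.sub_mem hx haM.1) hbM.1
    refine ⟨⟨?_, ?_⟩, ?_, ?_⟩
    · -- ∈ (K ⊓ M)ᗮ
      have h1 : x - a ∈ (K ⊓ M)ᗮ := sub_orthogonalProjection_mem_orthogonal x
      have h2 : b ∈ (K ⊓ M)ᗮ :=
        Submodule.orthogonal_le inf_le_right hbM.2
      exact Submodule.sub_mem _ h1 h2
    · -- ∈ (K ⊓ Mᗮ)ᗮ
      have h1 : x - b ∈ (K ⊓ Mᗮ)ᗮ := sub_orthogonalProjection_mem_orthogonal x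
      have h2 : a ∈ (K ⊓ Mᗮ)ᗮ := by
        have : M ≤ (K ⊓ Mᗮ)ᗮ :=
          le_trans M.le_orthogonal_orthogonal (Submodule.orthogonal_le inf_le_right)
        exact this haM.2
      have : x - b - a ∈ (K ⊓ Mᗮ)ᗮ := Submodule.sub_mem _ h1 h2
      rwa [sub_right_comm] at this
    · exact (le_trans K.le_orthogonal_orthogonal (Submodule.orthogonal_le inf_le_left)) hxK
    · exact (le_trans K.le_orthogonal_orthogonal (Submodule.orthogonal_le inf_le_left)) hxK

theorem stmt15 (K₀ M₀ : Submodule ℂ E)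
    (hK₀ : IsClosed (K₀ : Set E)) (hM₀ : IsClosed (M₀ : Set E))
    (hne : proj K₀ ∘L proj M₀ ≠ proj M₀ ∘L proj K₀) :
    K₀ ⊓ (com K₀ M₀)ᗮ ≠ ⊥ ∧
      (K₀ ⊓ (com K₀ M₀)ᗮ) ⊓ (M₀ ⊓ (com K₀ M₀)ᗮ) = ⊥ ∧
      sproj (K₀ ⊓ (com K₀ M₀)ᗮ) (M₀ ⊓ (com K₀ M₀)ᗮ) = K₀ ⊓ (com K₀ M₀)ᗮ := by
  haveI : CompleteSpace K₀ := hK₀.completeSpace_coe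
  haveI : CompleteSpace M₀ := hM₀.completeSpace_coe
  haveI : CompleteSpace ↥(K₀ ⊓ M₀) := (aux_closed_inf K₀ M₀ hK₀ hM₀).completeSpace_coe
  set C := com K₀ M₀ with hC
  refine ⟨?_, ?_, ?_⟩
  · -- K ≠ ⊥
    intro hbot
    apply hne
    have hsplit : ∀ x ∈ K₀, ∃ a ∈ K₀ ⊓ M₀, ∃ b ∈ K₀ ⊓ M₀ᗮ, x = a + b := by
      intro x hx
      obtain ⟨a, haM, b, hbM, hz⟩ := decomp K₀ M₀ hK₀ hM₀ hx
      rw [hbot] at hz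
      have : x - a - b = 0 := hz
      exact ⟨a, haM, b, hbM, by linear_combination (norm := abel) this⟩
    ext u
    simp only [ContinuousLinearMap.comp_apply]
    rw [proj_apply_of_isClosed M₀ hM₀, proj_apply_of_isClosed K₀ hK₀,
      proj_apply_of_isClosed K₀ hK₀, proj_apply_of_isClosed M₀ hM₀]
    set A := K₀ ⊓ M₀ with hA
    have hAu : (Submodule.orthogonalProjection A u : E) ∈ A := (Submodule.orthogonalProjection A u).2
    -- P_{K₀} (P_{M₀} u) = P_A u
    have h1 : (Submodule.orthogonalProjection K₀ ((Submodule.orthogonalProjection M₀ u : E)) : E) =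
        (Submodule.orthogonalProjection A u : E) := by
      apply eq_orthogonalProjection_of_mem_orthogonal
      · exact hAu.1
      · -- P_{M₀}u - P_A u ∈ K₀ᗮ
        have hAperp : (Submodule.orthogonalProjection M₀ u : E) - (Submodule.orthogonalProjection A u : E) ∈ Aᗮ := by
          have e1 : u - (Submodule.orthogonalProjection A u : E) ∈ Aᗮ :=
            sub_orthogonalProjection_mem_orthogonal u
          have e2 : u - (Submodule.orthogonalProjection M₀ u : E) ∈ Aᗮ :=
            Submodule.orthogonal_le inf_le_right (sub_orthogonalProjection_mem_orthogonal u)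
          have := Submodule.sub_mem _ e1 e2
          rwa [sub_sub_sub_cancel_left] at this
        rw [Submodule.mem_orthogonal]
        intro k hk
        obtain ⟨a, haM, b, hbM, rfl⟩ := hsplit k hk
        rw [inner_add_left]
        have hza : ⟪a, (Submodule.orthogonalProjection M₀ u : E) - (Submodule.orthogonalProjection A u : E)⟫ = 0 :=
          hAperp a haM
        have hzb : ⟪b, (Submodule.orthogonalProjection M₀ u : E) - (Submodule.orthogonalProjection A u : E)⟫ = 0 := by
          rw [inner_sub_right]
          have hb1 : ⟪b, (Submodule.orthogonalProjection M₀ u : E)⟫ = 0 := by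
            rw [← inner_eq_zero_symm]
            exact (Submodule.mem_orthogonal _ _).1 hbM.2 _ (Submodule.orthogonalProjection M₀ u).2
          have hb2 : ⟪b, (Submodule.orthogonalProjection A u : E)⟫ = 0 := by
            rw [← inner_eq_zero_symm]
            exact (Submodule.mem_orthogonal _ _).1 hbM.2 _ hAu.2
          rw [hb1, hb2, sub_zero]
        rw [hza, hzb, add_zero]
    -- P_{M₀} (P_{K₀} u) = P_A u
    have h2 : (Submodule.orthogonalProjection M₀ ((Submodule.orthogonalProjection K₀ u : E)) : E) =
        (Submodule.orthogonalProjection A u : E) := by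
      apply eq_orthogonalProjection_of_mem_orthogonal
      · exact hAu.2
      · obtain ⟨a, haM, b, hbM, hk⟩ := hsplit _ (Submodule.orthogonalProjection K₀ u).2
        have hAperp : (Submodule.orthogonalProjection K₀ u : E) - (Submodule.orthogonalProjection A u : E) ∈ Aᗮ := by
          have e1 : u - (Submodule.orthogonalProjection A u : E) ∈ Aᗮ :=
            sub_orthogonalProjection_mem_orthogonal u
          have e2 : u - (Submodule.orthogonalProjection K₀ u : E) ∈ Aᗮ :=
            Submodule.orthogonal_le inf_le_left (sub_orthogonalProjection_mem_orthogonal u)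
          have := Submodule.sub_mem _ e1 e2
          rwa [sub_sub_sub_cancel_left] at this
        have hbA : b ∈ Aᗮ := Submodule.orthogonal_le inf_le_right hbM.2
        have haz : a - (Submodule.orthogonalProjection A u : E) = 0 := by
          have hmem : a - (Submodule.orthogonalProjection A u : E) ∈ A := A.sub_mem haM hAu
          have hmem' : a - (Submodule.orthogonalProjection A u : E) ∈ Aᗮ := by
            have : (Submodule.orthogonalProjection K₀ u : E) - (Submodule.orthogonalProjection A u : E) - b ∈ Aᗮ :=
              Submodule.sub_mem _ hAperp hbA
            have heq : (Submodule.orthogonalProjection K₀ u : E) - (Submodule.orthogonalProjection A u : E) - b =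
                a - (Submodule.orthogonalProjection A u : E) := by
              rw [hk]; abel
            rwa [heq] at this
          have := (Submodule.mem_orthogonal _ _).1 hmem' _ hmem
          rwa [inner_self_eq_zero] at this
        have hab : a = (Submodule.orthogonalProjection A u : E) := sub_eq_zero.mp haz
        have heqb : (Submodule.orthogonalProjection K₀ u : E) - (Submodule.orthogonalProjection A u : E) = b := by
          rw [hk, ← hab]; abel
        rw [heqb]
        exact hbM.2
    rw [h1, h2]
  · -- K ⊓ M = ⊥
    rw [eq_bot_iff]
    rintro x ⟨⟨hxK, hxC⟩, hxM, -⟩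
    have hxCm : x ∈ C := mem_com_left_inf K₀ M₀ ⟨hxK, hxM⟩
    have := (Submodule.mem_orthogonal' _ _).1 hxC _ hxCm
    rw [inner_self_eq_zero] at this
    simpa using this
  · -- sproj K M = K
    have hKMbot : (K₀ ⊓ Cᗮ) ⊓ (M₀ ⊓ Cᗮ)ᗮ = ⊥ := by
      rw [eq_bot_iff]
      rintro x ⟨⟨hxK, hxC⟩, hxM⟩
      have hxM₀ : x ∈ M₀ᗮ := by
        rw [Submodule.mem_orthogonal]
        intro y hy
        obtain ⟨a, haM, b, hbM, hz⟩ := decomp M₀ K₀ hM₀ hK₀ hy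
        rw [← com_comm] at hz
        have hya : ⟪a, x⟫ = 0 :=
          (Submodule.mem_orthogonal _ _).1 hxC _
            (mem_com_left_inf K₀ M₀ ⟨haM.2, haM.1⟩)
        have hyb : ⟪b, x⟫ = 0 :=
          (Submodule.mem_orthogonal _ _).1 hxC _
            (mem_com_leftc_inf K₀ M₀ ⟨hbM.2, hbM.1⟩)
        have hyz : ⟪y - a - b, x⟫ = 0 :=
          (Submodule.mem_orthogonal _ _).1 hxM _ hz
        have : ⟪y, x⟫ = ⟪y - a - b, x⟫ + ⟪a, x⟫ + ⟪b, x⟫ := by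
          rw [← inner_add_left, ← inner_add_left]
          congr 1
          abel
        rw [this, hya, hyb, hyz]
        ring
      have hxCm : x ∈ C := mem_com_left_infc K₀ M₀ ⟨hxK, hxM₀⟩
      have := (Submodule.mem_orthogonal' _ _).1 hxC _ hxCm
      rw [inner_self_eq_zero] at this
      simpa using this
    haveI : CompleteSpace ↥(K₀ ⊓ Cᗮ) :=
      (aux_closed_inf K₀ Cᗮ hK₀ C.isClosed_orthogonal).completeSpace_coe
    unfold sproj sasaki
    rw [hKMbot, sup_bot_eq, Submodule.orthogonal_orthogonal]
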